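/- Let A, B be commutative rings with A such that every finitely generated A-module is finitely presented, and let F : A-Mod → B-Mod be an additive functor that preserves small colimits, is symmetric monoidal (strong tensor, so F(A) ≅ B and F(M ⊗_A N) ≅ F(M) ⊗_B F(N)), and sends A^n to B^n compatibly. Then there is a ring homomorphism f : A → B with F naturally isomorphic to the extension of scalars functor M ↦ B ⊗_A M. -/

import Mathlib

open CategoryTheory Limits MonoidalCategory

open scoped ChangeOfRings

universe u

namespace EWAux

theorem isIso_app_of_isColimit {J C D : Type*} [Category J] [Category C] [Category D]
    {K : J ⥤ C} {c : Cocone K} (hc : IsColimit c) {G₁ G₂ : C ⥤ D} (α : G₁ ⟶ G₂)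
    [PreservesColimit K G₁] [PreservesColimit K G₂]
    (h : ∀ j, IsIso (α.app (K.obj j))) : IsIso (α.app c.pt) := by
  let h₁ := isColimitOfPreserves G₁ hc
  let h₂ := isColimitOfPreserves G₂ hc
  haveI : ∀ j, IsIso ((Functor.whiskerLeft K α).app j) := h
  haveI : IsIso (Functor.whiskerLeft K α) := NatIso.isIso_of_isIso_app _
  have key : α.app c.pt =
      (IsColimit.coconePointsIsoOfNatIso h₁ h₂ (asIso (Functor.whiskerLeft K α))).hom := by
    apply h₁.hom_ext; intro j
    rw [IsColimit.comp_coconePointsIsoOfNatIso_hom]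
    simpa using (α.naturality (c.ι.app j)).symm
  rw [key]; infer_instance

theorem isIso_app_of_iso {C D : Type*} [Category C] [Category D] {G₁ G₂ : C ⥤ D}
    (α : G₁ ⟶ G₂) {X Y : C} (e : X ≅ Y) [IsIso (α.app X)] : IsIso (α.app Y) := by
  have : α.app Y = G₁.map e.inv ≫ α.app X ≫ G₂.map e.hom := by
    rw [← α.naturality e.hom, ← Category.assoc, ← G₁.map_comp, e.inv_hom_id, G₁.map_id,
      Category.id_comp]
  rw [this]; infer_instance

lemma mcomp_apply {R : Type u} [Ring R] {M N P : ModuleCat R} (f : M ⟶ N) (g : N ⟶ P)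
    (x : M) : (f ≫ g) x = g (f x) := rfl

lemma smul_whisker_conj {R : Type u} [CommRing R] (b : R) (N : ModuleCat R) :
    (λ_ N).inv ≫ ((b • 𝟙 (𝟙_ (ModuleCat R))) ▷ N) ≫ (λ_ N).hom = b • 𝟙 N := by
  apply ConcreteCategory.hom_ext
  intro x
  show (λ_ N).hom (((b • 𝟙 (𝟙_ (ModuleCat R))) ▷ N) ((λ_ N).inv x)) = b • x
  rw [ModuleCat.MonoidalCategory.leftUnitor_inv_apply,
    ModuleCat.MonoidalCategory.whiskerRight_apply]
  show (λ_ N).hom ((b • (1 : R)) ⊗ₜ[R] x) = b • x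
  rw [ModuleCat.MonoidalCategory.leftUnitor_hom_apply]
  rw [smul_eq_mul, mul_one]

lemma unit_endo_eq {R : Type u} [CommRing R] (g : 𝟙_ (ModuleCat R) ⟶ 𝟙_ (ModuleCat R)) :
    g = (show R from g (1 : R)) • 𝟙 (𝟙_ (ModuleCat R)) := by
  apply ModuleCat.hom_ext
  apply LinearMap.ext_ring
  show (g 1 : R) = (show R from g (1 : R)) • (1 : R)
  rw [smul_eq_mul, mul_one]

section Main

variable {A B : Type u} [CommRing A] [CommRing B]
variable (F : ModuleCat.{u} A ⥤ ModuleCat.{u} B) [F.Additive] [F.Monoidal]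

local notation "e" => Functor.Monoidal.εIso F

/-- The candidate ring homomorphism, as a bare function. -/
noncomputable def τ₀ (a : A) : B :=
  (e).inv (F.map (a • 𝟙 (𝟙_ (ModuleCat A))) ((e).hom (1 : B)))

lemma conj_eq (a : A) :
    (e).hom ≫ F.map (a • 𝟙 (𝟙_ (ModuleCat A))) ≫ (e).inv
      = τ₀ F a • 𝟙 (𝟙_ (ModuleCat B)) :=
  unit_endo_eq ((e).hom ≫ F.map (a • 𝟙 (𝟙_ (ModuleCat A))) ≫ (e).inv)

lemma map_smul_id (a : A) (M : ModuleCat A) :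
    F.map (a • 𝟙 M) = τ₀ F a • 𝟙 (F.obj M) := by
  have h1 : a • 𝟙 M = (λ_ M).inv ≫ ((a • 𝟙 (𝟙_ (ModuleCat A))) ▷ M) ≫ (λ_ M).hom :=
    (smul_whisker_conj a M).symm
  rw [h1, F.map_comp, F.map_comp, Functor.Monoidal.map_leftUnitor_inv,
    Functor.Monoidal.map_whiskerRight, Functor.Monoidal.map_leftUnitor]
  rw [← smul_whisker_conj (τ₀ F a) (F.obj M), ← conj_eq]
  simp [MonoidalCategory.comp_whiskerRight]

lemma map_smul_apply (a : A) (M : ModuleCat A) (x : F.obj M) :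
    F.map (a • 𝟙 M) x = τ₀ F a • x := by
  rw [map_smul_id]; rfl

/-- The candidate ring homomorphism. -/
noncomputable def τ : A →+* B where
  toFun := τ₀ F
  map_one' := by
    simp only [τ₀, one_smul, F.map_id, ModuleCat.id_apply]
    exact (e).hom_inv_id_apply (1 : B)
  map_zero' := by
    simp only [τ₀, zero_smul]
    rw [F.map_zero]; simp
  map_add' a a' := by
    simp only [τ₀, add_smul]
    rw [F.map_add]; simp
  map_mul' a a' := by
    show τ₀ F (a * a') = τ₀ F a * τ₀ F a'
    have h1 : (a * a') • 𝟙 (𝟙_ (ModuleCat A))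
        = (a • 𝟙 (𝟙_ (ModuleCat A))) ≫ (a' • 𝟙 (𝟙_ (ModuleCat A))) := by
      rw [Linear.smul_comp, Linear.comp_smul, Category.comp_id, smul_smul, mul_comm]
    simp only [τ₀, h1, F.map_comp]
    rw [mcomp_apply, map_smul_apply, map_smul, smul_eq_mul, mul_comm]
    rfl

/-- `a ↦ a • m` as a morphism from the unit. -/
noncomputable def toUnit {M : ModuleCat A} (m : M) : 𝟙_ (ModuleCat A) ⟶ M :=
  ModuleCat.ofHom (LinearMap.toSpanSingleton A M m)

lemma toUnit_comp {M N : ModuleCat A} (m : M) (g : M ⟶ N) :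
    toUnit m ≫ g = toUnit (g m) := by
  apply ModuleCat.hom_ext
  apply LinearMap.ext_ring
  show g ((1 : A) • m) = (1 : A) • g m
  rw [one_smul, one_smul]

lemma toUnit_smul {M : ModuleCat A} (a : A) (m : M) :
    toUnit (a • m) = (a • 𝟙 (𝟙_ (ModuleCat A))) ≫ toUnit m := by
  apply ModuleCat.hom_ext
  apply LinearMap.ext_ring
  show (1 : A) • (a • m) = toUnit m ((a • 𝟙 (𝟙_ (ModuleCat A))) (1 : A))
  rw [one_smul]
  show a • m = toUnit m (a • (1 : A))
  rw [smul_eq_mul, mul_one]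
  rfl

lemma toUnit_add {M : ModuleCat A} (m m' : M) :
    toUnit (m + m') = toUnit m + toUnit m' := by
  apply ModuleCat.hom_ext
  apply LinearMap.ext_ring
  show (1 : A) • (m + m') = (1 : A) • m + (1 : A) • m'
  simp

/-- the unit element of `F.obj (𝟙_)` -/
noncomputable def eOne : F.obj (𝟙_ (ModuleCat A)) := (e).hom (1 : B)

/-- The natural `A`-linear map `M → F M`. -/
noncomputable def tHom (M : ModuleCat A) :
    M ⟶ (ModuleCat.restrictScalars (τ F)).obj (F.obj M) :=
  ModuleCat.ofHom (X := M) (Y := (ModuleCat.restrictScalars (τ F)).obj (F.obj M))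
  { toFun := fun m => F.map (toUnit m) (eOne F)
    map_add' := fun m m' => by
      dsimp only
      rw [toUnit_add, F.map_add]; rfl
    map_smul' := fun a m => by
      dsimp only
      rw [toUnit_smul, F.map_comp, mcomp_apply, map_smul_apply, map_smul]
      rfl }

lemma tHom_naturality {M N : ModuleCat A} (g : M ⟶ N) (m : M) :
    tHom F N (g m) = F.map g (tHom F M m) := by
  show F.map (toUnit (g m)) (eOne F) = F.map g (F.map (toUnit m) (eOne F))
  rw [← toUnit_comp, F.map_comp, mcomp_apply]

/-- The component maps of the natural transformation `extendScalars (τ F) ⟶ F`. -/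
noncomputable def αApp (M : ModuleCat A) : (ModuleCat.extendScalars (τ F)).obj M ⟶ F.obj M :=
  ModuleCat.ExtendRestrictScalarsAdj.HomEquiv.fromExtendScalars (τ F) (tHom F M)

lemma αApp_tmul (M : ModuleCat A) (s : B) (m : M) :
    αApp F M (s ⊗ₜ[A, τ F] m) = s • tHom F M m := by
  letI : Module A ↑(F.obj M) := Module.compHom ↑(F.obj M) (τ F)
  letI : Module A B := Module.compHom B (τ F)
  show ModuleCat.ExtendRestrictScalarsAdj.HomEquiv.fromExtendScalars (τ F) (tHom F M)
    (s ⊗ₜ[A, τ F] m) = s • tHom F M m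
  erw [ModuleCat.ExtendRestrictScalarsAdj.HomEquiv.fromExtendScalars_hom_apply]
  erw [TensorProduct.lift.tmul]
  rfl

/-- The natural transformation from extension of scalars to `F`. -/
noncomputable def αNat : ModuleCat.extendScalars (τ F) ⟶ F where
  app M := αApp F M
  naturality M N g := by
    apply ConcreteCategory.hom_ext
    intro z
    rw [mcomp_apply, mcomp_apply]
    induction z using TensorProduct.induction_on with
    | zero => erw [map_zero, map_zero]
    | tmul s m =>
        erw [ModuleCat.ExtendScalars.map_tmul]
        erw [αApp_tmul, αApp_tmul, map_smul, tHom_naturality]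
        rfl
    | add z₁ z₂ h₁ h₂ =>
        erw [map_add (ConcreteCategory.hom ((ModuleCat.extendScalars (τ F)).map g)),
          map_add (ConcreteCategory.hom (αApp F N)), h₁, h₂,
          map_add (ConcreteCategory.hom (αApp F M)), map_add (ConcreteCategory.hom (F.map g))]

lemma tmul_eq (s : B) (a : A) :
    (s ⊗ₜ[A, τ F] a) = ((s * τ F a) : B) ⊗ₜ[A, τ F] (1 : A) := by
  letI : Module A B := Module.compHom B (τ F)
  have h := TensorProduct.smul_tmul (R := A) a s (1 : A)
  have ha : a • (1 : A) = a := by rw [smul_eq_mul, mul_one]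
  have hs : a • s = τ F a * s := rfl
  rw [ha, hs] at h
  rw [← h, mul_comm]

lemma toUnit_one : toUnit (M := 𝟙_ (ModuleCat A)) (1 : A) = 𝟙 (𝟙_ (ModuleCat A)) := by
  apply ModuleCat.hom_ext
  apply LinearMap.ext_ring
  show (1 : A) • (1 : A) = (1 : A)
  rw [smul_eq_mul, mul_one]

lemma αApp_tmul_one (b : B) :
    αApp F (𝟙_ (ModuleCat A)) (b ⊗ₜ[A, τ F] (1 : A)) = (e).hom b := by
  rw [αApp_tmul]
  show b • F.map (toUnit (1 : A)) (eOne F) = (e).hom b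
  rw [toUnit_one, F.map_id, ModuleCat.id_apply]
  show b • (e).hom (1 : B) = (e).hom b
  rw [← map_smul]
  congr 1
  rw [smul_eq_mul, mul_one]

lemma exists_tmul_one (z : (ModuleCat.extendScalars (τ F)).obj (𝟙_ (ModuleCat A))) :
    ∃ b : B, z = b ⊗ₜ[A, τ F] (1 : A) := by
  letI : Module A B := Module.compHom B (τ F)
  induction z using TensorProduct.induction_on with
  | zero =>
      refine ⟨0, ?_⟩
      rw [TensorProduct.zero_tmul]
      rfl
  | tmul s a => exact ⟨(show B from s) * τ F a, tmul_eq F (show B from s) a⟩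
  | add z₁ z₂ h₁ h₂ =>
      obtain ⟨b₁, rfl⟩ := h₁
      obtain ⟨b₂, rfl⟩ := h₂
      refine ⟨b₁ + b₂, ?_⟩
      rw [TensorProduct.add_tmul]
      rfl

lemma isIso_α_unit : IsIso (αApp F (𝟙_ (ModuleCat A))) := by
  haveI : Mono (αApp F (𝟙_ (ModuleCat A))) := by
    rw [ModuleCat.mono_iff_injective]
    intro z₁ z₂ h
    obtain ⟨b₁, rfl⟩ := exists_tmul_one F z₁
    obtain ⟨b₂, rfl⟩ := exists_tmul_one F z₂
    erw [αApp_tmul_one, αApp_tmul_one] at h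
    have hb : b₁ = b₂ :=
      ((e).hom_inv_id_apply b₁).symm.trans
        ((congrArg (e).inv h).trans ((e).hom_inv_id_apply b₂))
    rw [hb]
  haveI : Epi (αApp F (𝟙_ (ModuleCat A))) := by
    rw [ModuleCat.epi_iff_surjective]
    intro y
    refine ⟨((e).inv y) ⊗ₜ[A, τ F] (1 : A), ?_⟩
    rw [αApp_tmul_one]
    exact (e).inv_hom_id_apply y
  exact isIso_of_mono_of_epi _

/-- The cofan exhibiting `I →₀ A` as a coproduct of copies of the unit. -/
noncomputable def freeCofan (I : Type u) : Cofan (fun _ : I => 𝟙_ (ModuleCat A)) :=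
  Cofan.mk (ModuleCat.of A (I →₀ A))
    (fun i => ModuleCat.ofHom (Finsupp.lsingle i : A →ₗ[A] (I →₀ A)))

/-- The cofan `freeCofan` is colimiting. -/
noncomputable def freeCofanIsColimit (I : Type u) : IsColimit (freeCofan (A := A) I) :=
  mkCofanColimit _
    (fun t => ModuleCat.ofHom (Finsupp.lsum ℕ (fun i => (t.inj i).hom) : (I →₀ A) →ₗ[A] ↑t.pt))
    (fun t i => by
      apply ModuleCat.hom_ext
      apply LinearMap.ext_ring
      show Finsupp.lsum ℕ (fun i => (t.inj i).hom) (Finsupp.single i 1)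
        = t.inj i (1 : A)
      rw [Finsupp.lsum_single])
    (fun t m hm => by
      apply ModuleCat.hom_ext
      apply Finsupp.lhom_ext'
      intro i
      apply LinearMap.ext_ring
      show m (Finsupp.single i 1)
        = (Finsupp.lsum ℕ (fun i => (t.inj i).hom)).comp (Finsupp.lsingle i) (1 : A)
      rw [LinearMap.comp_apply]
      show m (Finsupp.single i 1)
        = Finsupp.lsum ℕ (fun i => (t.inj i).hom) (Finsupp.single i 1)
      rw [Finsupp.lsum_single]
      exact congrArg (fun (g : 𝟙_ (ModuleCat A) ⟶ t.pt) => g (1 : A)) (hm i))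

variable [PreservesColimits F]

lemma isIso_α_free (I : Type u) : IsIso ((αNat F).app (ModuleCat.of A (I →₀ A))) := by
  haveI : PreservesColimits (ModuleCat.extendScalars (τ F)) :=
    (ModuleCat.extendRestrictScalarsAdj (τ F)).leftAdjoint_preservesColimits
  exact isIso_app_of_isColimit (freeCofanIsColimit I) (αNat F)
    (by rintro ⟨i⟩; exact isIso_α_unit F)

lemma isIso_α_all (N : ModuleCat A) : IsIso ((αNat F).app N) := by
  haveI : PreservesColimits (ModuleCat.extendScalars (τ F)) :=
    (ModuleCat.extendRestrictScalarsAdj (τ F)).leftAdjoint_preservesColimits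
  haveI : PreservesColimitsOfSize.{0, 0} F :=
    preservesSmallestColimits_of_preservesColimits F
  haveI : PreservesColimitsOfSize.{0, 0} (ModuleCat.extendScalars (τ F)) :=
    preservesSmallestColimits_of_preservesColimits _
  let P : ModuleCat A := ModuleCat.of A ((N : Type u) →₀ A)
  let p : P ⟶ N := ModuleCat.ofHom (Finsupp.linearCombination A _root_.id)
  have hp : Function.Surjective p := Finsupp.linearCombination_id_surjective A ↑N
  let K : Submodule A ↑P := LinearMap.ker p.hom
  let Q : ModuleCat A := ModuleCat.of A ((K : Type u) →₀ A)
  let q : Q ⟶ P := ModuleCat.ofHom (K.subtype.comp (Finsupp.linearCombination A _root_.id))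
  have w : q ≫ p = 0 := by
    apply ConcreteCategory.hom_ext
    intro x
    show p (K.subtype (Finsupp.linearCombination A _root_.id x)) = 0
    exact (Finsupp.linearCombination A _root_.id x).2
  let S := ShortComplex.mk q p w
  have hS : S.Exact := by
    rw [ShortComplex.moduleCat_exact_iff_range_eq_ker]
    show LinearMap.range (K.subtype.comp (Finsupp.linearCombination A _root_.id))
      = LinearMap.ker p.hom
    rw [LinearMap.range_comp, Finsupp.linearCombination_range A Function.surjective_id,
      Submodule.map_top, Submodule.range_subtype]
  haveI : Epi S.g := (ModuleCat.epi_iff_surjective (f := p)).2 hp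
  have hc : IsColimit (CokernelCofork.ofπ S.g S.zero) := hS.gIsCokernel
  exact isIso_app_of_isColimit hc (αNat F)
    (by rintro (_ | _)
        · exact isIso_α_free F ((K : Type u))
        · exact isIso_α_free F ((N : Type u)))

theorem main : ∃ f : A →+* B, Nonempty (F ≅ ModuleCat.extendScalars f) := by
  haveI : ∀ N, IsIso ((αNat F).app N) := isIso_α_all F
  haveI : IsIso (αNat F) := NatIso.isIso_of_isIso_app _
  exact ⟨τ F, ⟨(asIso (αNat F)).symm⟩⟩

end Main

end EWAux

/-- Let `A`, `B` be commutative rings such that every finitely generated `A`-module is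
finitely presented.  Any additive, cocontinuous, strong symmetric monoidal functor
`F : A-Mod → B-Mod` is naturally isomorphic to extension of scalars along some ring
homomorphism `f : A → B`. -/
theorem cocontinuous_monoidal_functor_is_extension_of_scalars
    {A B : Type u} [CommRing A] [CommRing B]
    (hA : ∀ (M : Type u) [AddCommGroup M] [Module A M],
      Module.Finite A M → Module.FinitePresentation A M)
    (F : ModuleCat.{u} A ⥤ ModuleCat.{u} B) [F.Additive] [F.Braided]
    [Limits.PreservesColimits F] :
    ∃ f : A →+* B, Nonempty (F ≅ ModuleCat.extendScalars f) := by
  exact EWAux.main F
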